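/- arXiv:2308.08118 — 4 statements merged into one kernel-verified Lean document; each statement's English description precedes it below -/
import Mathlib

section
/- Let R be a discrete valuation ring with uniformizer t and let n ≥ 3 be an integer. Write B = R/(t^n) and B' = R/(t^{n-1}), and let π'' : B → B' be the canonical projection (induced by the identity of R). If A is a subring of B such that the restriction of π'' to A is surjective onto B', then A = B. -/
/-- Let `R` be a discrete valuation ring with uniformizer `t` and let `n ≥ 3`.
Write `B = R/(t^n)` and `B' = R/(t^{n-1})`, and let `π'' : B → B'` be the canonical
projection. If `A` is a subring of `B` such that the restriction of `π''` to `A` is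
surjective onto `B'`, then `A = B`. -/
theorem stmt_0 (R : Type*) [CommRing R] [IsDomain R] [IsDiscreteValuationRing R]
    (t : R) (ht : Irreducible t) (n : ℕ) (hn : 3 ≤ n)
    (A : Subring (R ⧸ Ideal.span {t ^ n}))
    (hsurj : Function.Surjective fun a : A =>
      (Ideal.Quotient.factor (S := Ideal.span {t ^ n}) (T := Ideal.span {t ^ (n - 1)})
        (Ideal.span_singleton_le_span_singleton.mpr (pow_dvd_pow t (Nat.sub_le n 1))))
        (a : R ⧸ Ideal.span {t ^ n})) :
    A = ⊤ := by
  have hle : Ideal.span {t ^ n} ≤ Ideal.span {t ^ (n - 1)} :=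
    Ideal.span_singleton_le_span_singleton.mpr (pow_dvd_pow t (Nat.sub_le n 1))
  set f := Ideal.Quotient.factor (S := Ideal.span {t ^ n}) (T := Ideal.span {t ^ (n - 1)}) hle with hfdef
  set φ := Ideal.Quotient.mk (Ideal.span {t ^ n}) with hφdef
  have hsurj' : ∀ b' : R ⧸ Ideal.span {t ^ (n - 1)}, ∃ a : A, f a = b' := hsurj
  have hfφ : ∀ r : R, f (φ r) = Ideal.Quotient.mk (Ideal.span {t ^ (n - 1)}) r := fun r =>
    Ideal.Quotient.factor_mk hle r
  have hzero : ∀ m : ℕ, n ≤ m → φ (t ^ m) = 0 := fun m hm =>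
    Ideal.Quotient.eq_zero_iff_mem.mpr (Ideal.mem_span_singleton.mpr (pow_dvd_pow t hm))
  have hker : ∀ x : R ⧸ Ideal.span {t ^ n}, f x = 0 → ∃ c : R, x = φ c * φ (t ^ (n - 1)) := by
    intro x hx
    obtain ⟨y, rfl⟩ := Ideal.Quotient.mk_surjective x
    rw [hfφ] at hx
    obtain ⟨c, hc⟩ := Ideal.mem_span_singleton.mp (Ideal.Quotient.eq_zero_iff_mem.mp hx)
    exact ⟨c, by rw [hc, map_mul]; ring⟩
  -- squares of the t^{n-1}-shifted elements
  have hsq : φ (t ^ (n - 1)) * φ (t ^ (n - 1)) = 0 := by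
    rw [← map_mul, ← pow_add]
    exact hzero _ (by omega)
  -- an element of A mapping to t
  obtain ⟨a, ha⟩ := hsurj' (Ideal.Quotient.mk _ t)
  obtain ⟨c, hc⟩ := hker ((a : R ⧸ Ideal.span {t ^ n}) - φ t)
    (by rw [map_sub, ha, hfφ, sub_self])
  have haeq : (a : R ⧸ Ideal.span {t ^ n}) = φ t + φ c * φ (t ^ (n - 1)) := by
    rw [← hc]; ring
  have key : ∀ k : ℕ, (a : R ⧸ Ideal.span {t ^ n}) ^ (2 + k) = φ (t ^ (2 + k)) := by
    intro k
    induction k with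
    | zero =>
      have h1 : φ t * φ (t ^ (n - 1)) = 0 := by
        rw [← map_mul, ← pow_succ']
        exact hzero _ (by omega)
      calc (a : R ⧸ Ideal.span {t ^ n}) ^ (2 + 0)
          = φ t ^ 2 + 2 * φ c * (φ t * φ (t ^ (n - 1))) +
              φ c ^ 2 * (φ (t ^ (n - 1)) * φ (t ^ (n - 1))) := by
            rw [haeq]; ring
        _ = φ (t ^ (2 + 0)) := by
            rw [h1, hsq, mul_zero, mul_zero, add_zero, add_zero, ← map_pow]
    | succ k ih =>
      have h2 : φ (t ^ (2 + k)) * φ (t ^ (n - 1)) = 0 := by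
        rw [← map_mul, ← pow_add]
        exact hzero _ (by omega)
      calc (a : R ⧸ Ideal.span {t ^ n}) ^ (2 + (k + 1))
          = (a : R ⧸ Ideal.span {t ^ n}) ^ (2 + k) * (a : R ⧸ Ideal.span {t ^ n}) := by ring
        _ = φ (t ^ (2 + k)) * (φ t + φ c * φ (t ^ (n - 1))) := by rw [ih, haeq]
        _ = φ (t ^ (2 + k)) * φ t + φ c * (φ (t ^ (2 + k)) * φ (t ^ (n - 1))) := by ring
        _ = φ (t ^ (2 + (k + 1))) := by rw [h2, ← map_mul, ← pow_succ]; ring_nf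
  -- t^{n-1} lies in A
  have htA : φ (t ^ (n - 1)) ∈ A := by
    have h3 : 2 + (n - 3) = n - 1 := by omega
    have := key (n - 3)
    rw [h3] at this
    rw [← this]
    exact pow_mem a.2 _
  -- every multiple of t^{n-1} lies in A
  have hmem : ∀ s : R, φ s * φ (t ^ (n - 1)) ∈ A := by
    intro s
    obtain ⟨a', ha'⟩ := hsurj' (Ideal.Quotient.mk _ s)
    obtain ⟨u, hu⟩ := hker ((a' : R ⧸ Ideal.span {t ^ n}) - φ s)
      (by rw [map_sub, ha', hfφ, sub_self])
    have : φ s * φ (t ^ (n - 1)) = (a' : R ⧸ Ideal.span {t ^ n}) * φ (t ^ (n - 1)) := by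
      have ha'eq : (a' : R ⧸ Ideal.span {t ^ n}) = φ s + φ u * φ (t ^ (n - 1)) := by
        rw [← hu]; ring
      rw [ha'eq]
      calc φ s * φ (t ^ (n - 1))
          = φ s * φ (t ^ (n - 1)) + φ u * (φ (t ^ (n - 1)) * φ (t ^ (n - 1))) := by
            rw [hsq]; ring
        _ = (φ s + φ u * φ (t ^ (n - 1))) * φ (t ^ (n - 1)) := by ring
    rw [this]
    exact A.mul_mem a'.2 htA
  rw [eq_top_iff]
  intro x _
  obtain ⟨r, rfl⟩ := Ideal.Quotient.mk_surjective x
  obtain ⟨a₀, ha₀⟩ := hsurj' (Ideal.Quotient.mk _ r)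
  obtain ⟨c₀, hc₀⟩ := hker ((a₀ : R ⧸ Ideal.span {t ^ n}) - φ r)
    (by rw [map_sub, ha₀, hfφ, sub_self])
  have : φ r = (a₀ : R ⧸ Ideal.span {t ^ n}) - φ c₀ * φ (t ^ (n - 1)) := by
    rw [← hc₀]; ring
  show φ r ∈ A
  rw [this]
  exact A.sub_mem a₀.2 (hmem c₀)
end

section
/- Let R be a discrete valuation ring with uniformizer t, let n ≥ 3 be an integer, and let π : R → B := R/(t^n) be the quotient map. Let A be a subring of B such that for every r ∈ R there exists s ∈ R with π(r) − π(s)·π(t)^{n-1} ∈ A. Then π(r)·π(t)^m ∈ A for every r ∈ R and every integer m ≥ 1. -/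
/-- Let `R` be a DVR with uniformizer `t`, `n ≥ 3`, `π : R → B := R/(t^n)` the quotient
map, and `A` a subring of `B` such that for every `r ∈ R` there exists `s ∈ R` with
`π r - π s * (π t)^(n-1) ∈ A`. Then `π r * (π t)^m ∈ A` for every `r ∈ R` and `m ≥ 1`. -/
theorem stmt_2 (R : Type*) [CommRing R] [IsDomain R] [IsDiscreteValuationRing R]
    (t : R) (ht : Irreducible t) (n : ℕ) (hn : 3 ≤ n)
    (A : Subring (R ⧸ Ideal.span {t ^ n}))
    (hA : ∀ r : R, ∃ s : R,
      Ideal.Quotient.mk (Ideal.span {t ^ n}) r -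
        Ideal.Quotient.mk (Ideal.span {t ^ n}) s *
          (Ideal.Quotient.mk (Ideal.span {t ^ n}) t) ^ (n - 1) ∈ A) :
    ∀ (r : R) (m : ℕ), 1 ≤ m →
      Ideal.Quotient.mk (Ideal.span {t ^ n}) r *
        (Ideal.Quotient.mk (Ideal.span {t ^ n}) t) ^ m ∈ A := by
  obtain ⟨k, rfl⟩ : ∃ k, n = k + 3 := ⟨n - 3, by omega⟩
  set π := Ideal.Quotient.mk (Ideal.span {t ^ (k + 3)}) with hπ
  have h0 : (π t) ^ (k + 3) = 0 := by
    rw [← map_pow]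
    exact Ideal.Quotient.eq_zero_iff_mem.mpr (Ideal.subset_span rfl)
  -- the socle lies in A
  have hN : ∀ s : R, π s * (π t) ^ (k + 2) ∈ A := by
    intro s
    obtain ⟨s₁, h1⟩ := hA (s * t ^ (k + 1))
    obtain ⟨s₂, h2⟩ := hA t
    have h12 := A.mul_mem h1 h2
    have key : (π (s * t ^ (k + 1)) - π s₁ * (π t) ^ (k + 3 - 1)) *
        (π t - π s₂ * (π t) ^ (k + 3 - 1)) = π s * (π t) ^ (k + 2) := by
      show (π s * π t ^ (k + 1) - π s₁ * (π t) ^ (k + 2)) *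
        (π t - π s₂ * (π t) ^ (k + 2)) = π s * (π t) ^ (k + 2)
      linear_combination (-(π s * π s₂ * (π t) ^ k) - π s₁
        + π s₁ * π s₂ * (π t) ^ (k + 1)) * h0
    rwa [key] at h12
  intro r m _
  obtain ⟨s, hs⟩ := hA (r * t ^ m)
  have h3 := A.add_mem hs (hN s)
  rw [show k + 3 - 1 = k + 2 from rfl, sub_add_cancel, map_mul, map_pow] at h3
  exact h3
end

section
/- Let A be a commutative ring and let (I_n)_{n≥0} be a sequence of ideals of A such that I_0 = A, I_{n+1} ⊆ I_n for every n ≥ 0, and I_n = I_1^n + I_{n+1} for every n ≥ 1. Assume moreover that there exists a positive integer a such that I_{m+a} = I_m · I_a for every m ≥ 0. Then I_n = I_1^n for every n ≥ 0. -/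
/-- Let `A` be a commutative ring and `(I_n)` a sequence of ideals with `I 0 = ⊤`,
`I (n+1) ⊆ I n` for all `n`, and `I n = (I 1)^n + I (n+1)` for all `n ≥ 1`. If there
is a positive integer `a` with `I (m+a) = I m * I a` for all `m ≥ 0`, then
`I n = (I 1)^n` for every `n ≥ 0`. -/
theorem stmt_4 (A : Type*) [CommRing A] (I : ℕ → Ideal A)
    (h0 : I 0 = ⊤) (hanti : ∀ n, I (n + 1) ≤ I n)
    (hgen : ∀ n, 1 ≤ n → I n = I 1 ^ n + I (n + 1))
    (hmul : ∃ a : ℕ, 0 < a ∧ ∀ m, I (m + a) = I m * I a) :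
    ∀ n, I n = I 1 ^ n := by
  obtain ⟨a, ha, hma⟩ := hmul
  have hant : ∀ m k, I (m + k) ≤ I m := by
    intro m k
    induction k with
    | zero => simp
    | succ k ih => exact le_trans (by rw [← Nat.add_assoc]; exact hanti (m + k)) ih
  have hpow : ∀ k, I (k * a) = I a ^ k := by
    intro k
    induction k with
    | zero => simpa using h0
    | succ k ih => rw [Nat.succ_mul, hma, ih, pow_succ]
  have hle : ∀ n, 1 ≤ n → I 1 ^ n ≤ I n := by
    intro n hn
    rw [hgen n hn, Ideal.add_eq_sup]
    exact le_sup_left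
  have hchain : ∀ n, 1 ≤ n → ∀ k, I n = I 1 ^ n + I (n + k) := by
    intro n hn k
    induction k with
    | zero =>
      rw [Nat.add_zero, Ideal.add_eq_sup, sup_eq_right.mpr (hle n hn)]
    | succ k ih =>
      have hpp : I 1 ^ (n + k) ≤ I 1 ^ n := Ideal.pow_le_pow_right (by omega)
      rw [ih, hgen (n + k) (by omega)]
      simp only [Ideal.add_eq_sup]
      rw [← sup_assoc, sup_eq_left.mpr hpp, ← Nat.add_assoc]
  have haI : I a ≤ I 1 := by
    have := hant 1 (a - 1)
    rwa [Nat.add_sub_cancel' ha] at this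
  intro n
  rcases Nat.eq_zero_or_pos n with rfl | hn
  · simp [h0]
  · have h1 : n ≤ n * a := Nat.le_mul_of_pos_right n ha
    have hc := hchain n hn (n * a - n)
    rw [Nat.add_sub_cancel' h1] at hc
    have hna : I (n * a) ≤ I 1 ^ n := by
      rw [hpow]
      exact pow_le_pow_left' haI n
    apply le_antisymm _ (hle n hn)
    rw [hc, Ideal.add_eq_sup]
    exact sup_le le_rfl hna
end

section
/- Let (A, 𝔪) be a Noetherian local ring and let (I_n)_{n≥0} be a sequence of ideals of A with I_0 = A, I_1 = 𝔪, I_{n+1} ⊆ I_n for every n ≥ 0, and I_m · I_n ⊆ I_{m+n} for all m, n ≥ 0. Suppose there exist elements x, y ∈ I_1 and z ∈ I_2 such that, writing J_1 = (x, y) and J_2 = (z) for the ideals they generate: (i) I_1 = I_2 + J_1; (ii) I_2 = I_3 + J_1^2 + J_2; (iii) I_n = I_{n+1} + I_1·I_{n−1} + I_2·I_{n−2} for every n ≥ 3; and (iv) there exists a positive integer a with I_{m+a} = I_m · I_a for every m ≥ 0. Then 𝔪 = (x, y, z); in particular the embedding dimension dim_{A/𝔪}(𝔪/𝔪²) is at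 most 3. -/
set_option maxHeartbeats 800000 in
/-- Let `(A, 𝔪)` be a Noetherian local ring and `(I_n)` a sequence of ideals with
`I 0 = ⊤`, `I 1 = 𝔪`, `I (n+1) ⊆ I n`, and `I m * I n ⊆ I (m+n)`. Suppose there are
`x, y ∈ I 1` and `z ∈ I 2` such that, with `J₁ = (x, y)` and `J₂ = (z)`:
(i) `I 1 = I 2 + J₁`; (ii) `I 2 = I 3 + J₁² + J₂`;
(iii) `I n = I (n+1) + I 1 * I (n-1) + I 2 * I (n-2)` for all `n ≥ 3`; and
(iv) there exists `a > 0` with `I (m+a) = I m * I a` for every `m ≥ 0`.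
Then `𝔪 = (x, y, z)`; in particular `dim_{A/𝔪}(𝔪/𝔪²) ≤ 3`. -/
theorem stmt_6 (A : Type*) [CommRing A] [IsNoetherianRing A] [IsLocalRing A]
    (I : ℕ → Ideal A) (h0 : I 0 = ⊤) (h1 : I 1 = IsLocalRing.maximalIdeal A)
    (hanti : ∀ n, I (n + 1) ≤ I n)
    (hmul : ∀ m n, I m * I n ≤ I (m + n))
    (x y z : A) (hx : x ∈ I 1) (hy : y ∈ I 1) (hz : z ∈ I 2)
    (hi : I 1 = I 2 + Ideal.span {x, y})
    (hii : I 2 = I 3 + Ideal.span {x, y} ^ 2 + Ideal.span {z})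
    (hiii : ∀ n, 3 ≤ n → I n = I (n + 1) + I 1 * I (n - 1) + I 2 * I (n - 2))
    (hpow : ∃ a : ℕ, 0 < a ∧ ∀ m, I (m + a) = I m * I a) :
    IsLocalRing.maximalIdeal A = Ideal.span {x, y, z} ∧
      Module.finrank (A ⧸ IsLocalRing.maximalIdeal A)
        (IsLocalRing.maximalIdeal A).Cotangent ≤ 3 := by
  obtain ⟨a, ha, hpa⟩ := hpow
  set m := IsLocalRing.maximalIdeal A with hm
  set K := Ideal.span {x, y, z} with hK
  -- monotonicity
  have hmono : ∀ p q : ℕ, p ≤ q → I q ≤ I p := by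
    intro p q hpq
    induction hpq with
    | refl => exact le_rfl
    | step h ih => exact (hanti _).trans ih
  have hIm : ∀ n, 1 ≤ n → I n ≤ m := fun n hn => h1 ▸ hmono 1 n hn
  -- I (2a) ≤ m ^ 2
  have h2a : I (a + a) ≤ m ^ 2 := by
    rw [hpa a, pow_two]
    exact Ideal.mul_mono (hIm a ha) (hIm a ha)
  -- step: for n ≥ 3, I n ≤ I (n+1) + m^2
  have hstep : ∀ n, 3 ≤ n → I n ≤ I (n + 1) + m ^ 2 := by
    intro n hn
    rw [hiii n hn]
    refine sup_le (sup_le le_sup_left ?_) ?_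
    · refine le_trans ?_ le_sup_right
      rw [pow_two]
      exact Ideal.mul_mono (hIm 1 le_rfl) (hIm (n - 1) (by omega))
    · refine le_trans ?_ le_sup_right
      rw [pow_two]
      exact Ideal.mul_mono (hIm 2 one_le_two) (hIm (n - 2) (by omega))
  -- I 3 ≤ I (3 + k) + m^2 for all k
  have hiter : ∀ k : ℕ, I 3 ≤ I (3 + k) + m ^ 2 := by
    intro k
    induction k with
    | zero => simpa using le_sup_left
    | succ n ih =>
      refine ih.trans (sup_le ?_ le_sup_right)
      have := hstep (3 + n) (by omega)
      rw [show 3 + n + 1 = 3 + (n + 1) from rfl] at this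
      exact this
  have hI3 : I 3 ≤ m ^ 2 := by
    refine (hiter (a + a)).trans (sup_le ?_ le_rfl)
    exact (hmono (a + a) (3 + (a + a)) (by omega)).trans h2a
  -- m ≤ K + m^2
  have hxy : Ideal.span {x, y} ≤ K := Ideal.span_mono (by
    intro t ht
    simp only [Set.mem_insert_iff, Set.mem_singleton_iff] at ht ⊢
    tauto)
  have hzK : Ideal.span {z} ≤ K := Ideal.span_mono (by
    intro t ht
    simp only [Set.mem_singleton_iff] at ht
    simp [ht])
  have hxym : Ideal.span {x, y} ≤ m := by
    rw [Ideal.span_le]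
    rintro t ht
    simp only [Set.mem_insert_iff, Set.mem_singleton_iff] at ht
    rcases ht with rfl | rfl
    · exact h1 ▸ hx
    · exact h1 ▸ hy
  have h2main : I 2 ≤ K + m ^ 2 := by
    rw [hii]
    refine sup_le (sup_le ?_ ?_) ?_
    · exact hI3.trans le_sup_right
    · refine le_trans ?_ le_sup_right
      rw [pow_two, pow_two]
      exact Ideal.mul_mono hxym hxym
    · exact hzK.trans le_sup_left
  have hmain : I 1 ≤ K + m ^ 2 := by
    rw [hi]
    exact sup_le h2main (hxy.trans le_sup_left)
  -- Nakayama
  have hKm : K ≤ m := by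
    rw [hK, Ideal.span_le]
    rintro t ht
    simp only [Set.mem_insert_iff, Set.mem_singleton_iff] at ht
    rcases ht with rfl | rfl | rfl
    · exact h1 ▸ hx
    · exact h1 ▸ hy
    · exact h1 ▸ (hanti 1 hz)
  have heq : m = K := by
    refine le_antisymm ?_ hKm
    refine Submodule.le_of_le_smul_of_le_jacobson_bot (IsNoetherian.noetherian m)
      (IsLocalRing.jacobson_eq_maximalIdeal (⊥ : Ideal A) bot_ne_top).ge ?_
    calc m = I 1 := h1.symm
      _ ≤ K + m ^ 2 := hmain
      _ = K ⊔ m • m := by rw [smul_eq_mul, pow_two]; rfl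
  refine ⟨heq, ?_⟩
  -- cotangent space
  have hx' : x ∈ IsLocalRing.maximalIdeal A := by rw [← hm, ← h1]; exact hx
  have hy' : y ∈ IsLocalRing.maximalIdeal A := by rw [← hm, ← h1]; exact hy
  have hz' : z ∈ IsLocalRing.maximalIdeal A := by rw [← hm, ← h1]; exact hanti 1 hz
  have hsA : Submodule.span A
      ({⟨x, hx'⟩, ⟨y, hy'⟩, ⟨z, hz'⟩} : Set (IsLocalRing.maximalIdeal A)) = ⊤ := by
    apply Submodule.map_injective_of_injective
      (Submodule.injective_subtype (IsLocalRing.maximalIdeal A))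
    rw [Submodule.map_span, Submodule.map_top, Submodule.range_subtype]
    have himg2 : (IsLocalRing.maximalIdeal A).subtype ''
        {⟨x, hx'⟩, ⟨y, hy'⟩, ⟨z, hz'⟩} = {x, y, z} := by
      simp [Set.image_insert_eq]
    rw [himg2]
    exact heq.symm
  have hspan := IsLocalRing.CotangentSpace.span_image_eq_top_iff.mpr hsA
  have himg : (IsLocalRing.maximalIdeal A).toCotangent ''
      {⟨x, hx'⟩, ⟨y, hy'⟩, ⟨z, hz'⟩} = Set.range
        ![(IsLocalRing.maximalIdeal A).toCotangent ⟨x, hx'⟩,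
          (IsLocalRing.maximalIdeal A).toCotangent ⟨y, hy'⟩,
          (IsLocalRing.maximalIdeal A).toCotangent ⟨z, hz'⟩] := by
    simp only [Set.image_insert_eq, Set.image_singleton, Matrix.range_cons,
      Matrix.range_empty, Set.union_empty]
    ext t; simp; tauto
  rw [himg] at hspan
  exact (finrank_le_of_span_eq_top hspan).trans_eq (by simp)
end
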